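/- Let F be a finite field with q elements, k ≤ m, and let A be a k × m matrix over F satisfying the columns condition over F. Assume the following Ramsey statement as hypothesis: for every r there is M = n(r, q, m) such that every r-coloring of F^M \ {0} admits a monochromatic solution of Ax = 0 with all coordinates nonzero. Assume also the removal lemma for systems over finite fields. Then there is c = c(r, q, m) > 0 such that for all sufficiently large N, every r-coloring of F^N \ {0} yields at least c·q^{N(m−k)} monochromatic solutions of Ax = 0. -/

import Mathlib

open Finset

/-- The columns condition over a field `F`: after reordering the columns there are indices
`0 = ks 0 < ks 1 < ... < ks t = m` with the first block of columns summing to `0` in `F^k`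
and each later block-sum an `F`-linear combination of the preceding columns. -/
def FieldColumnsCondition {F : Type} [Field F] {k m : ℕ}
    (A : Matrix (Fin k) (Fin m) F) : Prop :=
  ∃ (σ : Equiv.Perm (Fin m)) (t : ℕ) (ks : Fin (t + 1) → ℕ),
    0 < t ∧ ks 0 = 0 ∧ ks (Fin.last t) = m ∧ StrictMono ks ∧
    (∀ r : Fin k, ∑ j ∈ univ.filter (fun j : Fin m => (j : ℕ) < ks 1), A r (σ j) = 0) ∧
    (∀ i : Fin t, (i : ℕ) ≠ 0 → ∃ c : Fin m → F, ∀ r : Fin k,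
      ∑ j ∈ univ.filter
        (fun j : Fin m => ks i.castSucc ≤ (j : ℕ) ∧ (j : ℕ) < ks i.succ), A r (σ j) =
      ∑ j ∈ univ.filter (fun j : Fin m => (j : ℕ) < ks i.castSucc), c j * A r (σ j))

lemma greedy_aux {F : Type} [Field F] [Fintype F] [DecidableEq F] (M N : ℕ)
    (S : Finset (Fin N → F))
    (hS : Fintype.card F ^ M * S.card < Fintype.card F ^ N) :
    ∃ v : Fin M → (Fin N → F), ∀ x : Fin M → F, x ≠ 0 →
      (∑ l, x l • v l) ∉ S := by
  have key : ∀ j, j ≤ M → ∃ v : Fin j → (Fin N → F), ∀ x : Fin j → F, x ≠ 0 →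
      (∑ l, x l • v l) ∉ S := by
    intro j
    induction j with
    | zero =>
      intro _
      exact ⟨Fin.elim0, fun x hx => absurd (funext fun i => i.elim0) hx⟩
    | succ j ih =>
      intro hj
      obtain ⟨v, hv⟩ := ih (Nat.le_of_succ_le hj)
      set Bad : Finset (Fin N → F) :=
        ((univ : Finset F) ×ˢ (univ : Finset (Fin j → F)) ×ˢ S).image
          (fun p => (p.1)⁻¹ • (p.2.2 - ∑ l, p.2.1 l • v l)) with hBad
      have hcard : Bad.card < Fintype.card (Fin N → F) := by
        have h1 : Bad.card ≤ Fintype.card F * (Fintype.card F ^ j * S.card) := by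
          refine le_trans Finset.card_image_le ?_
          simp [Finset.card_product]
        have h2 : Fintype.card F * (Fintype.card F ^ j * S.card)
            ≤ Fintype.card F ^ M * S.card := by
          rw [← mul_assoc, ← pow_succ']
          exact Nat.mul_le_mul_right _ (Nat.pow_le_pow_right Fintype.card_pos hj)
        have h3 : Fintype.card (Fin N → F) = Fintype.card F ^ N := by
          simp [Fintype.card_fun]
        omega
      obtain ⟨u, hu⟩ : ∃ u, u ∉ Bad := by
        by_contra hcon
        push_neg at hcon
        have : (univ : Finset (Fin N → F)).card ≤ Bad.card :=
          Finset.card_le_card (fun u _ => hcon u)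
        rw [Finset.card_univ] at this
        omega
      refine ⟨Fin.snoc v u, ?_⟩
      intro x hx
      rw [Fin.sum_univ_castSucc]
      simp only [Fin.snoc_castSucc, Fin.snoc_last]
      by_cases h0 : x (Fin.last j) = 0
      · rw [h0, zero_smul, add_zero]
        refine hv (fun l => x l.castSucc) ?_
        intro hc
        apply hx
        funext i
        refine Fin.lastCases ?_ ?_ i
        · exact h0
        · exact fun l => congrFun hc l
      · intro hmem
        apply hu
        rw [hBad]
        refine Finset.mem_image.mpr
          ⟨⟨x (Fin.last j), fun l => x l.castSucc,
            (∑ l : Fin j, x l.castSucc • v l) + x (Fin.last j) • u⟩, ?_, ?_⟩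
        · simp [Finset.mem_product, hmem]
        · simp only [add_sub_cancel_left]
          exact inv_smul_smul₀ h0 u
  exact key M le_rfl

/-- let `F` be a finite field with `q` elements, `k ≤ m`, and `A` a `k × m`
matrix over `F` satisfying the columns condition over `F`. Assume the Ramsey statement (for
every `r` there is `M` such that every `r`-colouring of `F^M \ {0}` has a monochromatic
solution of `Ax = 0` with nonzero coordinates) and the removal lemma for systems over the
vector spaces `F^N`. Then there is `c = c(r, q, m) > 0` such that for all sufficiently large
`N`, every `r`-colouring of `F^N \ {0}` yields at least `c·q^{N(m−k)}` monochromatic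
solutions of `Ax = 0`. -/
theorem stmt18 (F : Type) [Field F] [Fintype F] [DecidableEq F] (q : ℕ)
    (hq : Fintype.card F = q) (k m : ℕ) (hkm : k ≤ m)
    (A : Matrix (Fin k) (Fin m) F) (hA : FieldColumnsCondition A) (r : ℕ) (hr : 0 < r)
    -- Ramsey hypothesis
    (hRamsey : ∃ M : ℕ, ∀ χ : (Fin M → F) → Fin r,
      ∃ x : Fin m → (Fin M → F), (∀ j, x j ≠ 0) ∧
        (∀ i : Fin k, ∑ j : Fin m, A i j • x j = 0) ∧
        (∃ c : Fin r, ∀ j, χ (x j) = c))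
    -- removal lemma hypothesis
    (hRemoval : ∀ ε : ℝ, 0 < ε → ∃ δ : ℝ, 0 < δ ∧
      ∀ N : ℕ, ∀ X : Fin m → Finset (Fin N → F),
        (Nat.card {x : Fin m → (Fin N → F) // (∀ i, x i ∈ X i) ∧
            ∀ i : Fin k, ∑ j : Fin m, A i j • x j = 0} : ℝ) ≤
          δ * (q : ℝ) ^ (N * (m - k)) →
        ∃ X' : Fin m → Finset (Fin N → F),
          (∀ i, X' i ⊆ X i) ∧ (∀ i, (((X i).card - (X' i).card : ℕ) : ℝ) ≤ ε * q ^ N) ∧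
          ¬ ∃ x : Fin m → (Fin N → F), (∀ i, x i ∈ X' i) ∧
              ∀ i : Fin k, ∑ j : Fin m, A i j • x j = 0) :
    ∃ c : ℝ, 0 < c ∧ ∃ N₀ : ℕ, ∀ N : ℕ, N₀ ≤ N → ∀ χ : (Fin N → F) → Fin r,
      c * (q : ℝ) ^ (N * (m - k)) ≤
        Nat.card {x : Fin m → (Fin N → F) // (∀ j, x j ≠ 0) ∧
          (∀ i : Fin k, ∑ j : Fin m, A i j • x j = 0) ∧
          (∃ co : Fin r, ∀ j, χ (x j) = co)} := by
  obtain ⟨M, hM⟩ := hRamsey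
  have hm : 0 < m := by
    obtain ⟨σ, t, ks, ht, h0, hlast, hmono, -, -⟩ := hA
    have h01 : (0 : Fin (t + 1)) < Fin.last t := by
      simp [Fin.lt_def, Fin.last]; omega
    have := hmono h01
    omega
  have hq2 : 2 ≤ q := by rw [← hq]; exact Fintype.one_lt_card
  have hq0 : (0 : ℝ) < q := by positivity
  set ε : ℝ := 1 / (2 * r * m * q ^ M) with hεdef
  have hε0 : 0 < ε := by
    apply div_pos one_pos
    positivity
  obtain ⟨δ, hδ0, hδ⟩ := hRemoval ε hε0
  refine ⟨δ, hδ0, M + 2, fun N hN χ => ?_⟩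
  by_contra hcon
  push_neg at hcon
  set X : Fin r → Fin m → Finset (Fin N → F) :=
    fun c0 _ => univ.filter (fun v => χ v = c0 ∧ v ≠ 0) with hX
  have hcount : ∀ c0 : Fin r,
      (Nat.card {x : Fin m → (Fin N → F) // (∀ i, x i ∈ X c0 i) ∧
        ∀ i : Fin k, ∑ j : Fin m, A i j • x j = 0} : ℝ) ≤ δ * (q : ℝ) ^ (N * (m - k)) := by
    intro c0
    have hinj : Nat.card {x : Fin m → (Fin N → F) // (∀ i, x i ∈ X c0 i) ∧
        ∀ i : Fin k, ∑ j : Fin m, A i j • x j = 0} ≤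
        Nat.card {x : Fin m → (Fin N → F) // (∀ j, x j ≠ 0) ∧
          (∀ i : Fin k, ∑ j : Fin m, A i j • x j = 0) ∧
          (∃ co : Fin r, ∀ j, χ (x j) = co)} := by
      refine Nat.card_le_card_of_injective
        (fun z => ⟨z.1, fun j => ((Finset.mem_filter.mp (z.2.1 j)).2).2, z.2.2,
          c0, fun j => ((Finset.mem_filter.mp (z.2.1 j)).2).1⟩) ?_
      intro a b hab
      exact Subtype.ext (Subtype.mk_eq_mk.mp hab)
    exact le_trans (Nat.cast_le.mpr hinj) hcon.le
  choose X' hsub hrem hnosol using fun c0 => hδ N (X c0) (hcount c0)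
  set B : Finset (Fin N → F) :=
    univ.biUnion (fun c0 : Fin r => univ.biUnion (fun i : Fin m => X c0 i \ X' c0 i))
    with hBdef
  have hB : (B.card : ℝ) ≤ r * m * (ε * q ^ N) := by
    have h1 : B.card ≤ ∑ c0 : Fin r, ∑ i : Fin m, (X c0 i \ X' c0 i).card := by
      refine le_trans (Finset.card_biUnion_le) ?_
      exact Finset.sum_le_sum fun c0 _ => Finset.card_biUnion_le
    calc (B.card : ℝ) ≤ ∑ c0 : Fin r, ∑ i : Fin m, ((X c0 i \ X' c0 i).card : ℝ) := by
          exact_mod_cast h1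
      _ ≤ ∑ c0 : Fin r, ∑ i : Fin m, (ε * q ^ N) := by
          refine Finset.sum_le_sum fun c0 _ => Finset.sum_le_sum fun i _ => ?_
          rw [Finset.card_sdiff_of_subset (hsub c0 i)]
          exact hrem c0 i
      _ = r * m * (ε * q ^ N) := by simp [mul_assoc]
  set S : Finset (Fin N → F) := insert 0 B with hSdef
  have hScard : (S.card : ℝ) ≤ r * m * (ε * q ^ N) + 1 := by
    refine le_trans (Nat.cast_le.mpr (Finset.card_insert_le _ _)) ?_
    push_cast
    linarith
  have hrmε : (r : ℝ) * m * ε = 1 / (2 * q ^ M) := by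
    rw [hεdef]
    field_simp
  have hnum : (q : ℝ) ^ M * S.card < (q : ℝ) ^ N := by
    have hqMN : 2 * (q : ℝ) ^ M * 2 ≤ (q : ℝ) ^ N := by
      have : (2 : ℝ) * 2 ≤ (q : ℝ) ^ 2 := by
        have : (2 : ℝ) ≤ q := by exact_mod_cast hq2
        nlinarith
      calc (2 : ℝ) * q ^ M * 2 = (2 * 2) * q ^ M := by ring
        _ ≤ (q : ℝ) ^ 2 * q ^ M := by
            have : (0:ℝ) ≤ (q:ℝ)^M := by positivity
            nlinarith
        _ = (q : ℝ) ^ (M + 2) := by rw [← pow_add]; ring_nf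
        _ ≤ (q : ℝ) ^ N := by
            apply pow_le_pow_right₀ (by linarith [show (2:ℝ) ≤ q from by exact_mod_cast hq2]) hN
    have hmain : (q : ℝ) ^ M * S.card ≤ (q : ℝ) ^ N / 2 + (q : ℝ) ^ M := by
      calc (q : ℝ) ^ M * S.card ≤ (q : ℝ) ^ M * (r * m * (ε * q ^ N) + 1) := by
            apply mul_le_mul_of_nonneg_left hScard (by positivity)
        _ = (r * m * ε) * ((q:ℝ) ^ M * q ^ N) + q ^ M := by ring
        _ = (q : ℝ) ^ N / 2 + q ^ M := by
            rw [hrmε]; field_simp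
    have hqN0 : (0 : ℝ) < (q : ℝ) ^ N := by positivity
    linarith
  have hnumℕ : Fintype.card F ^ M * S.card < Fintype.card F ^ N := by
    rw [hq]
    have : ((q ^ M * S.card : ℕ) : ℝ) < ((q ^ N : ℕ) : ℝ) := by push_cast; linarith
    exact_mod_cast this
  obtain ⟨v, hv⟩ := greedy_aux M N S hnumℕ
  set φ : (Fin M → F) → (Fin N → F) := fun y => ∑ l, y l • v l with hφ
  obtain ⟨x, hx0, hxsol, c0, hχ⟩ := hM (fun y => χ (φ y))
  set y : Fin m → (Fin N → F) := fun j => φ (x j) with hy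
  have hyS : ∀ j, y j ∉ S := fun j => hv (x j) (hx0 j)
  have hy0 : ∀ j, y j ≠ 0 := by
    intro j h
    exact hyS j (h ▸ Finset.mem_insert_self 0 B)
  have hysol : ∀ i : Fin k, ∑ j : Fin m, A i j • y j = 0 := by
    intro i
    have : ∑ j : Fin m, A i j • y j = φ (∑ j : Fin m, A i j • x j) := by
      simp only [hy, hφ, Finset.smul_sum]
      rw [Finset.sum_comm]
      refine Finset.sum_congr rfl fun l _ => ?_
      simp only [smul_smul]
      rw [← Finset.sum_smul]
      congr 1
      simp [Finset.sum_apply, Pi.smul_apply, smul_eq_mul]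
    rw [this, hxsol i, hφ]
    simp
  have hymem : ∀ j, y j ∈ X' c0 j := by
    intro j
    have hyX : y j ∈ X c0 j := by
      rw [hX]
      simp only [Finset.mem_filter, Finset.mem_univ, true_and]
      exact ⟨hχ j, hy0 j⟩
    by_contra hnot
    apply hyS j
    rw [hSdef]
    apply Finset.mem_insert_of_mem
    rw [hBdef]
    refine Finset.mem_biUnion.mpr ⟨c0, Finset.mem_univ _,
      Finset.mem_biUnion.mpr ⟨j, Finset.mem_univ _, ?_⟩⟩
    exact Finset.mem_sdiff.mpr ⟨hyX, hnot⟩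
  exact hnosol c0 ⟨y, hymem, hysol⟩
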